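/- Let A be a Banach algebra with a bounded approximate identity and Φ : A → A a map (not assumed linear or bounded) satisfying Φ(ab) = Φ(a)b for all a, b ∈ A. Then Φ is automatically linear and bounded. -/

import Mathlib

open scoped InnerProductSpace RightActions
open Filter Topology

universe u v

/-- The right Hilbert C*-module class as it stood in the older Mathlib (right action of `Aᵐᵒᵖ`). -/
class RightCStarModule (A : Type u) (E : Type v) [NonUnitalSemiring A] [StarRing A]
    [Module ℂ A] [AddCommGroup E] [Module ℂ E] [PartialOrder A] [SMul Aᵐᵒᵖ E] [Norm A] [Norm E]
    extends Inner A E where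
  inner_add_right {x} {y} {z} : inner x (y + z) = inner x y + inner x z
  inner_self_nonneg {x} : 0 ≤ inner x x
  inner_self {x} : inner x x = 0 ↔ x = 0
  inner_op_smul_right {a : A} {x y : E} : inner x (y <• a) = inner x y * a
  inner_smul_right_complex {z : ℂ} {x} {y} : inner x (z • y) = z • inner x y
  star_inner x y : star (inner x y) = inner y x
  norm_eq_sqrt_norm_inner_self x : ‖x‖ = √‖inner x x‖

section Defs

variable (A : Type*) (E : Type*) [NonUnitalCStarAlgebra A] [PartialOrder A] [StarOrderedRing A]
  [NormedAddCommGroup E] [NormedSpace ℂ E] [SMul Aᵐᵒᵖ E] [RightCStarModule A E]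

/-- An operator on a Hilbert C*-module is *adjointable* if it admits an adjoint with respect to
the `A`-valued inner product. -/
def Adjointable (T : E →L[ℂ] E) : Prop :=
  ∃ S : E →L[ℂ] E, ∀ x y : E, ⟪T x, y⟫_A = ⟪x, S y⟫_A

/-- `EJ A E J` is the closed linear span `E(J)` of `{ξ • a : ξ ∈ E, a ∈ J}`. -/
noncomputable def EJ (J : Set A) : Submodule ℂ E :=
  (Submodule.span ℂ {y : E | ∃ ξ : E, ∃ a ∈ J, y = ξ <• a}).topologicalClosure

/-- `JM A E M` is the closed linear span `J(M)` of `{⟪η, m⟫ : η ∈ E, m ∈ M}`. -/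
noncomputable def JM (M : Set E) : Submodule ℂ A :=
  (Submodule.span ℂ {a : A | ∃ η : E, ∃ m ∈ M, a = ⟪η, m⟫_A}).topologicalClosure

/-- `BS A E` is the C*-algebra `B`, the closure of the linear span of all inner products. -/
noncomputable def BS : Set A :=
  closure (Submodule.span ℂ {a : A | ∃ η ξ : E, a = ⟪η, ξ⟫_A} : Set A)

/-- `KE A E` is `K(E)`, the closed (non-unital) algebra generated by the rank-one operators
`θ_{η,ξ} : x ↦ η • ⟪ξ, x⟫`. -/
noncomputable def KE : NonUnitalSubalgebra ℂ (E →L[ℂ] E) :=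
  (NonUnitalAlgebra.adjoin ℂ
    {T : E →L[ℂ] E | ∃ η ξ : E, ∀ x : E, T x = η <• ⟪ξ, x⟫_A}).topologicalClosure

end Defs

section AuxiliaryForCentralizer
set_option linter.unusedSectionVars false
set_option maxHeartbeats 1000000
open Filter Topology Unitization

section ActMachinery
variable {B' : Type*} [NonUnitalNormedRing B'] [CompleteSpace B']
    [NormedSpace ℂ B'] [IsScalarTower ℂ B' B'] [SMulCommClass ℂ B' B']

local notation "𝒰" => WithLp 1 (Unitization ℂ B')

noncomputable def uf (u : 𝒰) : ℂ := (WithLp.equiv 1 (Unitization ℂ B') u).fst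
noncomputable def us (u : 𝒰) : B' := (WithLp.equiv 1 (Unitization ℂ B') u).snd
noncomputable def inrU (b : B') : 𝒰 := (WithLp.equiv 1 (Unitization ℂ B')).symm b

@[simp] lemma uf_mul (u v : 𝒰) : uf (u * v) = uf u * uf v := rfl
@[simp] lemma us_mul (u v : 𝒰) : us (u * v) = uf u • us v + uf v • us u + us u * us v := rfl
@[simp] lemma uf_add (u v : 𝒰) : uf (u + v) = uf u + uf v := rfl
@[simp] lemma us_add (u v : 𝒰) : us (u + v) = us u + us v := rfl
@[simp] lemma uf_sub (u v : 𝒰) : uf (u - v) = uf u - uf v := rfl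
@[simp] lemma us_sub (u v : 𝒰) : us (u - v) = us u - us v := rfl
@[simp] lemma uf_smul (c : ℂ) (u : 𝒰) : uf (c • u) = c * uf u := rfl
@[simp] lemma us_smul (c : ℂ) (u : 𝒰) : us (c • u) = c • us u := rfl
@[simp] lemma uf_one : uf (1 : 𝒰) = 1 := rfl
@[simp] lemma us_one : us (1 : 𝒰) = 0 := rfl
@[simp] lemma uf_inrU (b : B') : uf (inrU b) = 0 := rfl
@[simp] lemma us_inrU (b : B') : us (inrU b) = b := rfl

lemma unorm (u : 𝒰) : ‖u‖ = ‖uf u‖ + ‖us u‖ := WithLp.unitization_norm_def u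

@[simp] lemma unorm_one : ‖(1 : 𝒰)‖ = 1 := by simp [unorm]
lemma unorm_inrU (b : B') : ‖inrU b‖ = ‖b‖ := by simp [unorm]

noncomputable def act (u : 𝒰) (b : B') : B' := uf u • b + us u * b

lemma act_norm_le (u : 𝒰) (b : B') : ‖act u b‖ ≤ ‖u‖ * ‖b‖ := by
  rw [act, unorm, add_mul]
  refine (norm_add_le _ _).trans (add_le_add ?_ ?_)
  · rw [norm_smul]
  · exact norm_mul_le _ _

@[simp] lemma act_one (b : B') : act 1 b = b := by simp [act]

lemma act_mul (u v : 𝒰) (b : B') : act (u * v) b = act u (act v b) := by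
  simp only [act, uf_mul, us_mul]
  simp only [add_mul, mul_add, smul_add, mul_smul, smul_mul_assoc, mul_smul_comm, mul_assoc]
  abel

lemma act_sub (u v : 𝒰) (b : B') : act (u - v) b = act u b - act v b := by
  simp only [act, uf_sub, us_sub, sub_smul, sub_mul]; abel

lemma act_smul (c : ℂ) (u : 𝒰) (b : B') : act (c • u) b = c • act u b := by
  simp only [act, uf_smul, us_smul, smul_add, mul_smul, smul_mul_assoc]

lemma act_smul_right {B' : Type*} [NonUnitalNormedRing B'] [CompleteSpace B']
    [NormedSpace ℂ B'] [IsScalarTower ℂ B' B'] [SMulCommClass ℂ B' B']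
    (u : WithLp 1 (Unitization ℂ B')) (c : ℂ) (b : B') : act u (c • b) = c • act u b := by
  simp only [act, smul_add, mul_smul_comm, smul_comm (uf u) c b]

lemma act_one_sub_inrU (a b : B') : act (1 - inrU a) b = b - a * b := by
  simp [act, sub_mul]
  abel

end ActMachinery

section Step
variable {B' : Type*} [NonUnitalNormedRing B'] [CompleteSpace B']
    [NormedSpace ℂ B'] [IsScalarTower ℂ B' B'] [SMulCommClass ℂ B' B']
    {ι : Type*} [SemilatticeSup ι] [Nonempty ι]

local notation "𝒰" => WithLp 1 (Unitization ℂ B')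

lemma uf_norm_le (u : 𝒰) : ‖uf u‖ ≤ ‖u‖ := by rw [unorm]; exact le_add_of_nonneg_right (norm_nonneg _)
lemma us_norm_le (u : 𝒰) : ‖us u‖ ≤ ‖u‖ := by rw [unorm]; exact le_add_of_nonneg_left (norm_nonneg _)

/-- decomposition of an element of the unitization -/
lemma inl_add_inr_eq (u : 𝒰) : (uf u) • (1 : 𝒰) + inrU (us u) = u := by
  apply (WithLp.equiv 1 (Unitization ℂ B')).injective
  apply Unitization.ext
  · show uf _ = uf u
    simp
  · show us _ = us u
    simp

/-- choice of a good approximate-identity element -/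
lemma exists_good_index (e : ι → B') {C' : ℝ} (hC' : 1 ≤ C') (he_bdd : ∀ i, ‖e i‖ ≤ C')
    (he_left : ∀ a : B', Tendsto (fun i => e i * a) atTop (𝓝 a))
    (w : ℕ → B') (hw : Tendsto w atTop (𝓝 0)) (v : B') {ε : ℝ} (hε : 0 < ε) :
    ∃ i, (∀ m, ‖e i * w m - w m‖ ≤ ε) ∧ ‖e i * v - v‖ ≤ 1 := by
  have hC0 : (0:ℝ) < C' + 1 := by linarith
  obtain ⟨N, hN⟩ := Metric.tendsto_atTop.mp hw (ε / (C' + 1)) (by positivity)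
  have h1 : ∀ᶠ i in atTop, ∀ m ∈ Finset.range N, ‖e i * w m - w m‖ ≤ ε := by
    rw [Filter.eventually_all_finset]
    intro m _
    have := Metric.tendsto_nhds.mp (he_left (w m)) ε hε
    filter_upwards [this] with i hi
    rw [dist_eq_norm] at hi
    exact hi.le
  have h2 : ∀ᶠ i in atTop, ‖e i * v - v‖ ≤ 1 := by
    have := Metric.tendsto_nhds.mp (he_left v) 1 one_pos
    filter_upwards [this] with i hi
    rw [dist_eq_norm] at hi
    exact hi.le
  obtain ⟨i, hi1, hi2⟩ := (h1.and h2).exists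
  refine ⟨i, fun m => ?_, hi2⟩
  rcases lt_or_ge m N with hm | hm
  · exact hi1 m (Finset.mem_range.mpr hm)
  · have hwm : ‖w m‖ ≤ ε / (C' + 1) := by
      have := hN m hm
      rw [dist_zero_right] at this
      exact this.le
    calc ‖e i * w m - w m‖ ≤ ‖e i * w m‖ + ‖w m‖ := norm_sub_le _ _
    _ ≤ ‖e i‖ * ‖w m‖ + ‖w m‖ := by gcongr; exact norm_mul_le _ _
    _ ≤ C' * ‖w m‖ + ‖w m‖ := by gcongr; exact he_bdd i
    _ = (C' + 1) * ‖w m‖ := by ring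
    _ ≤ (C' + 1) * (ε / (C' + 1)) := by gcongr
    _ = ε := by field_simp

end Step

section MainStep
variable {B' : Type*} [NonUnitalNormedRing B'] [CompleteSpace B']
    [NormedSpace ℂ B'] [IsScalarTower ℂ B' B'] [SMulCommClass ℂ B' B']
    {ι : Type*} [SemilatticeSup ι] [Nonempty ι]

local notation "𝒰" => WithLp 1 (Unitization ℂ B')

lemma main_step (e : ι → B') {C' : ℝ} (hC' : 1 ≤ C') (he_bdd : ∀ i, ‖e i‖ ≤ C')
    (he_left : ∀ a : B', Tendsto (fun i => e i * a) atTop (𝓝 a))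
    (x : ℕ → B') (hx : Tendsto x atTop (𝓝 0))
    {γ : ℝ} (hγ : γ = (2 * (C' + 1))⁻¹)
    (d : 𝒰ˣ) {σ : ℝ} (hσ0 : 0 < σ) (hσ1 : σ ≤ 1) (hfst : uf (d : 𝒰) = (σ : ℂ))
    {δ : ℝ} (hδ : 0 < δ) :
    ∃ d' : 𝒰ˣ, uf (d' : 𝒰) = (((1 - γ) * σ : ℝ) : ℂ) ∧
      ‖(d' : 𝒰) - (d : 𝒰)‖ ≤ (1 + C') * γ * σ ∧
      ∀ m, ‖act ((d'⁻¹ : 𝒰ˣ) : 𝒰) (x m) - act ((d⁻¹ : 𝒰ˣ) : 𝒰) (x m)‖ ≤ δ := by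
  have hγ0 : 0 < γ := by rw [hγ]; positivity
  have hγ4 : γ ≤ 1/4 := by rw [hγ]; rw [div_eq_mul_inv, one_mul]; gcongr; linarith
  have hγC : γ * (1 + C') ≤ 1/2 := by
    rw [hγ]
    rw [inv_mul_le_iff₀ (by positivity)]
    linarith
  set M : ℝ := ‖((d⁻¹ : 𝒰ˣ) : 𝒰)‖ with hM
  have hM0 : 0 ≤ M := norm_nonneg _
  set v : B' := us ((d⁻¹ : 𝒰ˣ) : 𝒰) with hv
  set w : ℕ → B' := fun m => act ((d⁻¹ : 𝒰ˣ) : 𝒰) (x m) with hwdef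
  have hw : Tendsto w atTop (𝓝 0) := by
    apply squeeze_zero_norm (fun m => act_norm_le _ _)
    have := (tendsto_norm_zero.comp hx).const_mul M
    simpa using this
  set ε₂ : ℝ := δ / (1 + 4 * M * γ) with hε₂
  have hε₂0 : 0 < ε₂ := by positivity
  obtain ⟨i, hi1, hi2⟩ := exists_good_index e hC' he_bdd he_left w hw v hε₂0
  -- fst of d⁻¹
  have hσC : (σ : ℂ) ≠ 0 := by exact_mod_cast hσ0.ne'
  have hfstinv : uf ((d⁻¹ : 𝒰ˣ) : 𝒰) = (σ : ℂ)⁻¹ := by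
    have h1 : uf ((d : 𝒰) * ((d⁻¹ : 𝒰ˣ) : 𝒰)) = 1 := by rw [d.mul_inv]; exact uf_one
    rw [uf_mul, hfst] at h1
    field_simp at h1 ⊢
    linear_combination h1
  -- the perturbation q
  set q : 𝒰 := ((γ * σ : ℝ) : ℂ) • ((1 - inrU (e i)) * ((d⁻¹ : 𝒰ˣ) : 𝒰)) with hq
  have hqnorm : ‖q‖ ≤ 3/4 := by
    have hufq : uf q = (γ : ℂ) := by
      rw [hq]
      simp [hfstinv]
      field_simp
    have husq : us q = ((γ * σ : ℝ) : ℂ) • (v - e i * v) - ((γ : ℝ) : ℂ) • e i := by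
      rw [hq, us_smul]
      simp only [us_mul, uf_sub, uf_one, uf_inrU, us_sub, us_one, us_inrU, hfstinv,
        zero_sub, sub_zero, one_smul, smul_neg, neg_mul, smul_add, smul_sub, smul_smul]
      have hgs : ((γ * σ : ℝ) : ℂ) * (σ : ℂ)⁻¹ = ((γ : ℝ) : ℂ) := by
        push_cast; field_simp
      rw [hgs]
      abel
    rw [unorm, hufq, husq]
    have h1 : ‖((γ * σ : ℝ) : ℂ) • (v - e i * v) - ((γ : ℝ) : ℂ) • e i‖ ≤ γ * σ * 1 + γ * C' := by
      refine (norm_sub_le _ _).trans (add_le_add ?_ ?_)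
      · rw [norm_smul]
        simp only [Complex.norm_real, Real.norm_eq_abs]
        rw [abs_of_pos (by positivity), norm_sub_rev]
        exact mul_le_mul_of_nonneg_left hi2 (by positivity)
      · rw [norm_smul]
        simp only [Complex.norm_real, Real.norm_eq_abs]
        rw [abs_of_pos hγ0]
        exact mul_le_mul_of_nonneg_left (he_bdd i) hγ0.le
    have h2 : ‖(γ : ℂ)‖ = γ := by
      simp [abs_of_pos hγ0]
    rw [h2]
    have : γ * σ * 1 ≤ γ := by nlinarith
    nlinarith [hγC]
  have hqlt : ‖q‖ < 1 := lt_of_le_of_lt hqnorm (by norm_num)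
  set u : 𝒰ˣ := Units.oneSub q hqlt with hu
  set d' : 𝒰ˣ := u * d with hd'
  have hval : (d' : 𝒰) = (d : 𝒰) - ((γ * σ : ℝ) : ℂ) • (1 - inrU (e i)) := by
    have : (d' : 𝒰) = (1 - q) * (d : 𝒰) := rfl
    rw [this, sub_mul, one_mul, hq, smul_mul_assoc, mul_assoc, d.inv_mul, mul_one]
  refine ⟨d', ?_, ?_, ?_⟩
  · rw [hval, uf_sub, uf_smul, uf_sub, uf_one, uf_inrU, hfst]
    push_cast
    ring
  · rw [hval]
    simp only [sub_sub_cancel_left, norm_neg]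
    rw [norm_smul]
    simp only [Complex.norm_real, Real.norm_eq_abs]
    rw [abs_of_pos (by positivity)]
    calc γ * σ * ‖(1 : 𝒰) - inrU (e i)‖ ≤ γ * σ * (1 + C') := by
          gcongr
          refine (norm_sub_le _ _).trans ?_
          rw [unorm_one, unorm_inrU]
          gcongr
          exact he_bdd i
    _ = (1 + C') * γ * σ := by ring
  · intro m
    have hinv' : ((d'⁻¹ : 𝒰ˣ) : 𝒰) = ((d⁻¹ : 𝒰ˣ) : 𝒰) * ((u⁻¹ : 𝒰ˣ) : 𝒰) := by
      rw [hd', mul_inv_rev]; rfl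
    have hinvnorm : ‖((d'⁻¹ : 𝒰ˣ) : 𝒰)‖ ≤ 4 * M := by
      rw [hinv']
      refine (norm_mul_le _ _).trans ?_
      have : ‖((u⁻¹ : 𝒰ˣ) : 𝒰)‖ ≤ 4 := by
        have h1 : ((u⁻¹ : 𝒰ˣ) : 𝒰) = ∑' n : ℕ, q ^ n := rfl
        rw [h1]
        refine (tsum_geometric_le_of_norm_lt_one q hqlt).trans ?_
        rw [unorm_one]
        have h5 := one_div_le_one_div_of_le (by norm_num : (0:ℝ) < 1/4)
          (by linarith : (1:ℝ)/4 ≤ 1 - ‖q‖)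
        rw [one_div] at h5
        norm_num at h5 ⊢
        linarith
      calc M * ‖((u⁻¹ : 𝒰ˣ) : 𝒰)‖ ≤ M * 4 := by gcongr
      _ = 4 * M := by ring
    have hdiff : ((d'⁻¹ : 𝒰ˣ) : 𝒰) - ((d⁻¹ : 𝒰ˣ) : 𝒰)
        = ((d'⁻¹ : 𝒰ˣ) : 𝒰) * (((d : 𝒰) - (d' : 𝒰)) * ((d⁻¹ : 𝒰ˣ) : 𝒰)) := by
      rw [sub_mul, mul_sub]
      rw [← mul_assoc, ← mul_assoc]
      rw [mul_assoc ((d'⁻¹ : 𝒰ˣ) : 𝒰) (d : 𝒰) _, d.mul_inv, mul_one, d'.inv_mul, one_mul]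
    have key : act ((d'⁻¹ : 𝒰ˣ) : 𝒰) (x m) - act ((d⁻¹ : 𝒰ˣ) : 𝒰) (x m)
        = ((γ * σ : ℝ) : ℂ) • act ((d'⁻¹ : 𝒰ˣ) : 𝒰) (w m - e i * w m) := by
      rw [← act_sub, hdiff, act_mul]
      congr 1
      have : (d : 𝒰) - (d' : 𝒰) = ((γ * σ : ℝ) : ℂ) • (1 - inrU (e i)) := by
        rw [hval]; abel
      rw [this, smul_mul_assoc, act_smul, act_mul, act_one_sub_inrU, act_smul_right]
    rw [key, norm_smul]
    simp only [Complex.norm_real, Real.norm_eq_abs]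
    rw [abs_of_pos (by positivity)]
    calc γ * σ * ‖act ((d'⁻¹ : 𝒰ˣ) : 𝒰) (w m - e i * w m)‖
        ≤ γ * σ * (‖((d'⁻¹ : 𝒰ˣ) : 𝒰)‖ * ‖w m - e i * w m‖) := by
          gcongr
          exact act_norm_le _ _
    _ ≤ γ * 1 * ((4 * M) * ε₂) := by
          have h1 : ‖w m - e i * w m‖ ≤ ε₂ := by rw [norm_sub_rev]; exact hi1 m
          have h2 : ‖((d'⁻¹ : 𝒰ˣ) : 𝒰)‖ * ‖w m - e i * w m‖ ≤ (4 * M) * ε₂ :=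
            mul_le_mul hinvnorm h1 (norm_nonneg _) (by linarith)
          have h3 : γ * σ ≤ γ * 1 := by nlinarith
          exact mul_le_mul h3 h2 (by positivity) (by positivity)
    _ = 4 * M * γ * (δ / (1 + 4 * M * γ)) := by rw [hε₂]; ring
    _ ≤ δ := by
          rw [div_eq_mul_inv, ← mul_assoc]
          rw [mul_comm _ δ, mul_assoc]
          nth_rewrite 2 [← mul_one δ]
          gcongr
          rw [mul_inv_le_iff₀ (by positivity)]
          nlinarith
end MainStep

section CohenNull
variable {B' : Type*} [NonUnitalNormedRing B'] [CompleteSpace B']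
    [NormedSpace ℂ B'] [IsScalarTower ℂ B' B'] [SMulCommClass ℂ B' B']
    {ι : Type*} [SemilatticeSup ι] [Nonempty ι]

local notation "𝒰" => WithLp 1 (Unitization ℂ B')

lemma cohen_null (e : ι → B') {C' : ℝ} (hC' : 1 ≤ C') (he_bdd : ∀ i, ‖e i‖ ≤ C')
    (he_left : ∀ a : B', Tendsto (fun i => e i * a) atTop (𝓝 a))
    (x : ℕ → B') (hx : Tendsto x atTop (𝓝 0)) :
    ∃ z : B', ∃ y : ℕ → B', Tendsto y atTop (𝓝 0) ∧ ∀ m, x m = z * y m := by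
  set γ : ℝ := (2 * (C' + 1))⁻¹ with hγ
  have hγ0 : 0 < γ := by rw [hγ]; positivity
  have hγlt1 : γ < 1 := by
    rw [hγ]
    rw [inv_lt_one_iff₀]
    right; linarith
  have h1γ0 : 0 < 1 - γ := by linarith
  have h1γlt : 1 - γ < 1 := by linarith
  -- the recursively defined sequence of invertible elements
  let T := {p : 𝒰ˣ × ℝ // 0 < p.2 ∧ p.2 ≤ 1 ∧ uf ((p.1 : 𝒰ˣ) : 𝒰) = ((p.2 : ℝ) : ℂ)}
  have hstep : ∀ (p : T) (n : ℕ), ∃ p' : T, p'.1.2 = (1 - γ) * p.1.2 ∧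
      ‖((p'.1.1 : 𝒰ˣ) : 𝒰) - ((p.1.1 : 𝒰ˣ) : 𝒰)‖ ≤ (1 + C') * γ * p.1.2 ∧
      ∀ m, ‖act ((p'.1.1⁻¹ : 𝒰ˣ) : 𝒰) (x m) - act ((p.1.1⁻¹ : 𝒰ˣ) : 𝒰) (x m)‖
        ≤ (1/2 : ℝ) * (1/2)^n := by
    intro p n
    obtain ⟨d', h1, h2, h3⟩ := main_step e hC' he_bdd he_left x hx hγ p.1.1 p.2.1 p.2.2.1
      p.2.2.2 (δ := (1/2 : ℝ) * (1/2)^n) (by positivity)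
    refine ⟨⟨(d', (1 - γ) * p.1.2), ⟨mul_pos h1γ0 p.2.1, ?_, h1⟩⟩, rfl, h2, h3⟩
    have h4 : (1 - γ) * p.1.2 ≤ 1 * 1 :=
      mul_le_mul (by linarith) p.2.2.1 (le_of_lt p.2.1) (by norm_num)
    simpa using h4
  let seq : ℕ → T := fun n => Nat.rec ⟨(1, 1), ⟨one_pos, le_refl 1, by simp⟩⟩
    (fun n p => (hstep p n).choose) n
  have hseq_succ : ∀ n, seq (n + 1) = (hstep (seq n) n).choose := fun n => rfl
  set D : ℕ → 𝒰 := fun n => (((seq n).1.1 : 𝒰ˣ) : 𝒰) with hD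
  set Dinv : ℕ → 𝒰 := fun n => (((seq n).1.1⁻¹ : 𝒰ˣ) : 𝒰) with hDinv
  set b : ℕ → ℕ → B' := fun k m => act (Dinv k) (x m) with hb
  have hσ : ∀ n, (seq n).1.2 = (1 - γ)^n := by
    intro n
    induction n with
    | zero => rfl
    | succ n ih =>
        rw [hseq_succ n]
        rw [(hstep (seq n) n).choose_spec.1, ih]
        try ring
  have hDstep : ∀ n, ‖D (n + 1) - D n‖ ≤ ((1 + C') * γ) * (1 - γ)^n := by
    intro n
    have := (hstep (seq n) n).choose_spec.2.1
    rw [← hseq_succ n] at this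
    calc ‖D (n+1) - D n‖ ≤ (1 + C') * γ * (seq n).1.2 := this
    _ = ((1 + C') * γ) * (1 - γ)^n := by rw [hσ n]; try ring
  have hbstep : ∀ n m, ‖b (n + 1) m - b n m‖ ≤ (1/2 : ℝ) * (1/2)^n := by
    intro n m
    have := (hstep (seq n) n).choose_spec.2.2 m
    rw [← hseq_succ n] at this
    exact this
  -- limit of D
  have hDc : CauchySeq D := by
    apply cauchySeq_of_le_geometric (1 - γ) ((1 + C') * γ) h1γlt
    intro n
    rw [dist_eq_norm, norm_sub_rev]
    exact hDstep n
  obtain ⟨ζ, hζ⟩ := cauchySeq_tendsto_of_complete hDc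
  -- limits of b
  have hbc : ∀ m, ∃ L, Tendsto (fun k => b k m) atTop (𝓝 L) := by
    intro m
    apply cauchySeq_tendsto_of_complete
    apply cauchySeq_of_le_geometric (1/2 : ℝ) (1/2 : ℝ) (by norm_num)
    intro n
    rw [dist_eq_norm, norm_sub_rev]
    exact hbstep n m
  choose y hy using hbc
  have hyb : ∀ k m, dist (b k m) (y m) ≤ (1/2 : ℝ)^k := by
    intro k m
    have := dist_le_of_le_geometric_of_tendsto (1/2 : ℝ) (1/2 : ℝ) (by norm_num)
      (fun n => by rw [dist_eq_norm, norm_sub_rev]; exact hbstep n m) (hy m) k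
    calc dist (b k m) (y m) ≤ 1/2 * (1/2)^k / (1 - 1/2) := this
    _ = (1/2)^k := by ring
  -- component limits
  have tuf : Tendsto (fun n => uf (D n)) atTop (𝓝 (uf ζ)) := by
    rw [← tendsto_sub_nhds_zero_iff]
    refine squeeze_zero_norm (a := fun n => ‖D n - ζ‖) (fun n => ?_) ?_
    · rw [← uf_sub]
      exact uf_norm_le _
    · have := hζ.sub (tendsto_const_nhds (x := ζ))
      rw [sub_self] at this
      exact tendsto_norm_zero.comp this
  have tus : Tendsto (fun n => us (D n)) atTop (𝓝 (us ζ)) := by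
    rw [← tendsto_sub_nhds_zero_iff]
    refine squeeze_zero_norm (a := fun n => ‖D n - ζ‖) (fun n => ?_) ?_
    · rw [← us_sub]
      exact us_norm_le _
    · have := hζ.sub (tendsto_const_nhds (x := ζ))
      rw [sub_self] at this
      exact tendsto_norm_zero.comp this
  have hufD : ∀ n, uf (D n) = (((1 - γ)^n : ℝ) : ℂ) := by
    intro n
    have := (seq n).2.2.2
    rw [hσ n] at this
    exact this
  have hufζ : uf ζ = 0 := by
    have h2 : Tendsto (fun n => uf (D n)) atTop (𝓝 0) := by
      have hpow : Tendsto (fun n : ℕ => (1 - γ)^n) atTop (𝓝 0) :=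
        tendsto_pow_atTop_nhds_zero_of_lt_one (by linarith) h1γlt
      have h3 := (Complex.continuous_ofReal.tendsto 0).comp hpow
      simp only [hufD]
      simpa [Function.comp_def] using h3
    exact tendsto_nhds_unique tuf h2
  set z : B' := us ζ with hz
  refine ⟨z, y, ?_, ?_⟩
  · -- y is a null sequence
    rw [NormedAddCommGroup.tendsto_nhds_zero]
    intro ε hε
    obtain ⟨k, hk⟩ := exists_pow_lt_of_lt_one (by linarith : (0:ℝ) < ε/2) (by norm_num : (1:ℝ)/2 < 1)
    have hbknull : Tendsto (fun m => b k m) atTop (𝓝 0) := by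
      refine squeeze_zero_norm (a := fun m => ‖Dinv k‖ * ‖x m‖) (fun m => act_norm_le _ _) ?_
      have := (tendsto_norm_zero.comp hx).const_mul ‖Dinv k‖
      simpa using this
    have h1 : ∀ᶠ m in atTop, ‖b k m‖ < ε/2 :=
      (NormedAddCommGroup.tendsto_nhds_zero.mp hbknull) (ε/2) (by linarith)
    filter_upwards [h1] with m hm
    have hdec : ‖y m‖ ≤ ‖b k m‖ + dist (b k m) (y m) := by
      rw [dist_eq_norm]
      conv_lhs => rw [show y m = b k m - (b k m - y m) by abel]
      exact norm_sub_le _ _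
    have h6 := hyb k m
    linarith
  · -- factorization
    intro m
    have hfix : ∀ k, act (D k) (b k m) = x m := by
      intro k
      rw [hb]
      simp only
      rw [← act_mul]
      rw [hD, hDinv]
      simp only
      rw [Units.mul_inv]
      exact act_one _
    have hlim : Tendsto (fun k => act (D k) (b k m)) atTop (𝓝 (act ζ (y m))) := by
      simp only [act]
      exact (tuf.smul (hy m)).add (tus.mul (hy m))
    have hconst : Tendsto (fun _ : ℕ => x m) atTop (𝓝 (x m)) := tendsto_const_nhds
    have : x m = act ζ (y m) := by
      apply tendsto_nhds_unique ?_ hlim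
      simpa only [hfix] using hconst
    rw [this, act, hufζ, zero_smul, zero_add, hz]
end CohenNull

end AuxiliaryForCentralizer

variable {A E : Type*} [NonUnitalCStarAlgebra A] [PartialOrder A] [StarOrderedRing A]
  [NormedAddCommGroup E] [NormedSpace ℂ E] [SMul Aᵐᵒᵖ E] [RightCStarModule A E]

/-- On a Banach algebra with a bounded (two-sided) approximate identity, any map `Φ` satisfying
the centralizer identity `Φ(ab) = Φ(a)b` is automatically linear and bounded. -/
theorem centralizer_automatic_continuity {B' : Type*} [NonUnitalNormedRing B'] [CompleteSpace B']
    [NormedSpace ℂ B'] [IsScalarTower ℂ B' B'] [SMulCommClass ℂ B' B']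
    {ι : Type*} [SemilatticeSup ι] [Nonempty ι] (e : ι → B') (C : ℝ)
    (he_bdd : ∀ i, ‖e i‖ ≤ C)
    (he_left : ∀ a : B', Tendsto (fun i => e i * a) atTop (𝓝 a))
    (he_right : ∀ a : B', Tendsto (fun i => a * e i) atTop (𝓝 a))
    (Φ : B' → B') (hΦ : ∀ a b : B', Φ (a * b) = Φ a * b) :
    (∀ a b : B', Φ (a + b) = Φ a + Φ b) ∧
    (∀ (c : ℂ) (a : B'), Φ (c • a) = c • Φ a) ∧
    (∃ K : ℝ, ∀ a : B', ‖Φ a‖ ≤ K * ‖a‖) := by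
  have hΦ0 : Φ 0 = 0 := by
    have := hΦ 0 0
    simpa using this
  set C' : ℝ := max C 1 with hC'def
  have hC' : 1 ≤ C' := le_max_right _ _
  have he_bdd' : ∀ i, ‖e i‖ ≤ C' := fun i => (he_bdd i).trans (le_max_left _ _)
  have hfact2 : ∀ a b : B', ∃ z a' b' : B', a = z * a' ∧ b = z * b' := by
    intro a b
    set x : ℕ → B' := fun m => if m = 0 then a else if m = 1 then b else 0 with hxdef
    have hx : Tendsto x atTop (𝓝 0) := by
      apply tendsto_atTop_of_eventually_const (i₀ := 2)
      intro m hm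
      have h0 : m ≠ 0 := by omega
      have h1 : m ≠ 1 := by omega
      simp [hxdef, h0, h1]
    obtain ⟨z, y, _, hzy⟩ := cohen_null e hC' he_bdd' he_left x hx
    exact ⟨z, y 0, y 1, by simpa [hxdef] using hzy 0, by simpa [hxdef] using hzy 1⟩
  have hadd : ∀ a b : B', Φ (a + b) = Φ a + Φ b := by
    intro a b
    obtain ⟨z, a', b', ha, hb⟩ := hfact2 a b
    rw [ha, hb, ← mul_add, hΦ, hΦ, hΦ, mul_add]
  have hsmul : ∀ (c : ℂ) (a : B'), Φ (c • a) = c • Φ a := by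
    intro c a
    obtain ⟨z, a', _, ha, _⟩ := hfact2 a a
    rw [ha, ← mul_smul_comm, hΦ, hΦ, mul_smul_comm]
  refine ⟨hadd, hsmul, ?_⟩
  by_contra hK
  push_neg at hK
  have hsel : ∀ n : ℕ, ∃ a : B', (n : ℝ) * ‖a‖ < ‖Φ a‖ := fun n => hK n
  choose a ha using hsel
  have hapos : ∀ n : ℕ, 0 < ‖a (n+1)‖ := by
    intro n
    rcases eq_or_ne (a (n+1)) 0 with h0 | h0
    · exfalso
      have := ha (n+1)
      rw [h0, hΦ0] at this
      simp at this
    · exact norm_pos_iff.mpr h0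
  set r : ℕ → ℝ := fun n => (((n+1 : ℕ) : ℝ) * ‖a (n+1)‖)⁻¹ with hrdef
  have hrpos : ∀ n, 0 < r n := by
    intro n
    rw [hrdef]
    have := hapos n
    positivity
  set c : ℕ → B' := fun n => ((r n : ℝ) : ℂ) • a (n+1) with hcdef
  have hcnorm : ∀ n, ‖c n‖ = (((n+1 : ℕ) : ℝ))⁻¹ := by
    intro n
    rw [hcdef]
    simp only [norm_smul, Complex.norm_real, Real.norm_eq_abs]
    rw [abs_of_pos (hrpos n), hrdef]
    have h1 : ((n+1 : ℕ) : ℝ) ≠ 0 := by positivity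
    have h2 : ‖a (n+1)‖ ≠ 0 := (hapos n).ne'
    field_simp
  have hcnull : Tendsto c atTop (𝓝 0) := by
    refine squeeze_zero_norm (a := fun n => (((n+1 : ℕ) : ℝ))⁻¹) (fun n => le_of_eq (hcnorm n)) ?_
    have := tendsto_one_div_add_atTop_nhds_zero_nat (𝕜 := ℝ)
    simpa [one_div] using this
  have hΦc : ∀ n, 1 < ‖Φ (c n)‖ := by
    intro n
    have h1 : Φ (c n) = ((r n : ℝ) : ℂ) • Φ (a (n+1)) := hsmul _ _
    rw [h1, norm_smul]
    simp only [Complex.norm_real, Real.norm_eq_abs]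
    rw [abs_of_pos (hrpos n)]
    have h2 := ha (n+1)
    have h3 : r n * (((n+1 : ℕ) : ℝ) * ‖a (n+1)‖) = 1 := by
      rw [hrdef]
      apply inv_mul_cancel₀
      have := hapos n
      positivity
    calc (1:ℝ) = r n * (((n+1 : ℕ) : ℝ) * ‖a (n+1)‖) := h3.symm
    _ < r n * ‖Φ (a (n+1))‖ := by
        apply mul_lt_mul_of_pos_left h2 (hrpos n)
  obtain ⟨z, y, hy, hzy⟩ := cohen_null e hC' he_bdd' he_left c hcnull
  have hlim : Tendsto (fun n => Φ (c n)) atTop (𝓝 0) := by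
    have h1 : ∀ n, Φ (c n) = Φ z * y n := by
      intro n
      rw [hzy n, hΦ]
    simp only [h1]
    have := (tendsto_const_nhds (x := Φ z)).mul hy
    simpa using this
  have h2 : ∀ᶠ n in atTop, ‖Φ (c n)‖ < 1 :=
    (NormedAddCommGroup.tendsto_nhds_zero.mp hlim) 1 one_pos
  obtain ⟨n, hn⟩ := h2.exists
  exact absurd (hΦc n) (not_lt.mpr hn.le)
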